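/- Let V_h, M_h be the discrete spaces and (σ_h, λ_h, u_h) the solution of the discrete mixed obstacle problem. Then the discrete complementarity and feasibility properties hold: (i) div σ_h + λ_h = −Π_h⁰ f, (iii) ⟨λ_h, u_h − g⟩_Ω = 0, and (iv) u_h − Π_h⁰ g ≥ 0 a.e.; moreover λ_h(x)·(u_h(x) − Π_h⁰g(x)) = 0 for a.e. x ∈ Ω. -/

import Mathlib

open RealInnerProductSpace

/-- properties of the discrete solution: `ι` indexes the mesh
elements, `w i > 0` is the measure of element `i`, `ι → ℝ` models the piecewise
constants `P⁰(T)` (with weighted `L²` inner product `∑ i, w i * x i * y i`),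
`Vh` models `RT⁰(T)` and `dv` the divergence. `gbar = Π⁰g` and `fbar = Π⁰f` are
the elementwise averages of obstacle and load. If `(σ_h, λ_h, u_h)` (with
`λ_h ≥ 0`) solves the discrete mixed variational inequality, then:
(i) `div σ_h + λ_h = -Π⁰f`; (iii) `⟨λ_h, u_h - g⟩_Ω = 0`;
(iv) `u_h - Π⁰g ≥ 0`; and `λ_h (u_h - Π⁰g) = 0` pointwise (elementwise). -/
theorem stmt_17 {ι : Type*} [Fintype ι]
    {Vh : Type*} [NormedAddCommGroup Vh] [InnerProductSpace ℝ Vh]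
    (w : ι → ℝ) (hw : ∀ i, 0 < w i)
    (dv : Vh →ₗ[ℝ] (ι → ℝ))
    (gbar fbar : ι → ℝ)
    (σh : Vh) (lamh uh : ι → ℝ)
    (hlamh : ∀ i, 0 ≤ lamh i)
    (hVI : ∀ (τ : Vh) (ν : ι → ℝ), (∀ i, 0 ≤ ν i) →
      ∑ i, w i * ((ν i - lamh i) * gbar i) ≤
        ⟪σh, τ - σh⟫ +
          ∑ i, w i * (((dv τ i - dv σh i) + (ν i - lamh i)) * uh i))
    (heq : ∀ vh : ι → ℝ,
      ∑ i, w i * ((dv σh i + lamh i) * vh i) = - ∑ i, w i * (fbar i * vh i)) :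
    (∀ i, dv σh i + lamh i = - fbar i) ∧
    (∑ i, w i * (lamh i * (uh i - gbar i)) = 0) ∧
    (∀ i, 0 ≤ uh i - gbar i) ∧
    (∀ i, lamh i * (uh i - gbar i) = 0) := by
  classical
  -- (i)
  have hi : ∀ i, dv σh i + lamh i = - fbar i := by
    intro i
    have h := heq (fun j => if j = i then 1 else 0)
    simp only [mul_ite, mul_one, mul_zero, Finset.sum_ite_eq',
      Finset.mem_univ, if_true, ← Finset.sum_neg_distrib] at h
    have h' : w i * (dv σh i + lamh i) = w i * (- fbar i) := by
      have := h; ring_nf at this ⊢; linarith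
    exact mul_left_cancel₀ (hw i).ne' h'
  -- simplified VI with τ = σh
  have key : ∀ ν : ι → ℝ, (∀ i, 0 ≤ ν i) →
      ∑ i, w i * ((ν i - lamh i) * gbar i) ≤ ∑ i, w i * ((ν i - lamh i) * uh i) := by
    intro ν hν
    have h := hVI σh ν hν
    simpa using h
  -- (iii)
  have h1 := key (fun i => 2 * lamh i) (fun i => by have := hlamh i; linarith)
  have h2 := key (fun _ => 0) (fun i => le_refl 0)
  have hiii : ∑ i, w i * (lamh i * (uh i - gbar i)) = 0 := by
    have e1 : ∑ i, w i * ((2 * lamh i - lamh i) * gbar i)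
        = ∑ i, w i * (lamh i * gbar i) := by
      apply Finset.sum_congr rfl; intro i _; ring
    have e2 : ∑ i, w i * ((2 * lamh i - lamh i) * uh i)
        = ∑ i, w i * (lamh i * uh i) := by
      apply Finset.sum_congr rfl; intro i _; ring
    have e3 : ∑ i, w i * (((0:ℝ) - lamh i) * gbar i)
        = - ∑ i, w i * (lamh i * gbar i) := by
      rw [← Finset.sum_neg_distrib]
      apply Finset.sum_congr rfl; intro i _; ring
    have e4 : ∑ i, w i * (((0:ℝ) - lamh i) * uh i)
        = - ∑ i, w i * (lamh i * uh i) := by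
      rw [← Finset.sum_neg_distrib]
      apply Finset.sum_congr rfl; intro i _; ring
    rw [e1, e2] at h1
    rw [e3, e4] at h2
    have hEq : ∑ i, w i * (lamh i * gbar i) = ∑ i, w i * (lamh i * uh i) := le_antisymm h1 (by linarith)
    have : ∑ i, w i * (lamh i * (uh i - gbar i))
        = ∑ i, w i * (lamh i * uh i) - ∑ i, w i * (lamh i * gbar i) := by
      rw [← Finset.sum_sub_distrib]
      apply Finset.sum_congr rfl; intro i _; ring
    rw [this, hEq, sub_self]
  -- (iv)
  have hiv : ∀ i, 0 ≤ uh i - gbar i := by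
    intro i
    have h := key (fun j => lamh j + (if j = i then 1 else 0))
      (fun j => by have := hlamh j; split <;> linarith)
    have e1 : ∑ j, w j * ((lamh j + (if j = i then 1 else 0) - lamh j) * gbar j)
        = w i * gbar i := by
      rw [Finset.sum_eq_single i]
      · simp
      · intro b _ hb; simp [hb]
      · intro hb; exact absurd (Finset.mem_univ i) hb
    have e2 : ∑ j, w j * ((lamh j + (if j = i then 1 else 0) - lamh j) * uh j)
        = w i * uh i := by
      rw [Finset.sum_eq_single i]
      · simp
      · intro b _ hb; simp [hb]
      · intro hb; exact absurd (Finset.mem_univ i) hb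
    rw [e1, e2] at h
    nlinarith [hw i]
  refine ⟨hi, hiii, hiv, ?_⟩
  -- pointwise complementarity
  intro i
  have hterm : ∀ j, 0 ≤ w j * (lamh j * (uh j - gbar j)) := fun j =>
    mul_nonneg (hw j).le (mul_nonneg (hlamh j) (hiv j))
  have := (Finset.sum_eq_zero_iff_of_nonneg (fun j _ => hterm j)).mp hiii i (Finset.mem_univ i)
  have hwne := (hw i).ne'
  have : lamh i * (uh i - gbar i) = 0 := by
    rcases mul_eq_zero.mp this with h | h
    · exact absurd h hwne
    · exact h
  exact this
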